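/- Let K_4 • K_{1,n−4} be the graph obtained by identifying a vertex of K_4 with the center of a star K_{1,n−4}. Then ρ(K_4 • K_{1,n−4}) > √(n−1) + 3/(n−1) for n ≥ 5. -/

import Mathlib

open Classical in
/-- Adjacency matrix of a simple graph over ℝ. -/
noncomputable def adjMat {V : Type*} [Fintype V] (G : SimpleGraph V) : Matrix V V ℝ :=
  Matrix.of fun i j => if G.Adj i j then (1 : ℝ) else 0

/-- Spectral radius: largest adjacency eigenvalue. -/
noncomputable def specRad {V : Type*} [Fintype V] (G : SimpleGraph V) : ℝ :=
  sSup {t : ℝ | ∃ x : V → ℝ, x ≠ 0 ∧ (adjMat G).mulVec x = t • x}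

/-- `G` contains two edge-disjoint cycles. -/
def HasTwoEdgeDisjointCycles {V : Type*} (G : SimpleGraph V) : Prop :=
  ∃ (u v : V) (c₁ : G.Walk u u) (c₂ : G.Walk v v),
    c₁.IsCycle ∧ c₂.IsCycle ∧ ∀ e ∈ c₁.edges, e ∉ c₂.edges

/-- `G` contains two distinct cycles (as subgraphs) of the same length. -/
def HasTwoCyclesSameLength {V : Type*} [DecidableEq V] (G : SimpleGraph V) : Prop :=
  ∃ (u v : V) (c₁ : G.Walk u u) (c₂ : G.Walk v v),
    c₁.IsCycle ∧ c₂.IsCycle ∧ c₁.length = c₂.length ∧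
      c₁.edges.toFinset ≠ c₂.edges.toFinset

/-- The edge set of a triangle given by a triple of vertices. -/
def triEdges {V : Type*} (t : V × V × V) : Set (Sym2 V) :=
  {s(t.1, t.2.1), s(t.2.1, t.2.2), s(t.1, t.2.2)}

/-- `G` contains `k` pairwise edge-disjoint triangles. -/
def HasEdgeDisjointTriangles {V : Type*} (G : SimpleGraph V) (k : ℕ) : Prop :=
  ∃ T : Fin k → V × V × V,
    (∀ i, G.Adj (T i).1 (T i).2.1 ∧ G.Adj (T i).2.1 (T i).2.2 ∧ G.Adj (T i).1 (T i).2.2) ∧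
    ∀ i j, i ≠ j → Disjoint (triEdges (T i)) (triEdges (T j))

/-- The star `K_{1,n-1}` (center `0`) plus an edge between the leaves `1` and `2`. -/
def starPlus (n : ℕ) : SimpleGraph (Fin n) :=
  SimpleGraph.fromRel (fun x y => x.val = 0 ∨ (x.val < 3 ∧ y.val < 3))

/-- `K₄ • K_{1,n-4}`: `K₄` on `{0,1,2,3}` with `0` joined to everything. -/
def K4Star (n : ℕ) : SimpleGraph (Fin n) :=
  SimpleGraph.fromRel (fun x y => x.val = 0 ∨ (x.val < 4 ∧ y.val < 4))

/-- `K_{3,3} • K_{1,n-6}`: `K_{3,3}` with parts `{0,1,2}`, `{3,4,5}`, and the vertex `0`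
identified with the center of a star with leaves `6,…,n-1`. -/
def K33Star (n : ℕ) : SimpleGraph (Fin n) :=
  SimpleGraph.fromRel (fun x y =>
    (x.val < 3 ∧ 3 ≤ y.val ∧ y.val < 6) ∨ (x.val = 0 ∧ 6 ≤ y.val))

/-- `K_{⌈n/2⌉,⌊n/2⌋}` with a star `K_{1,k-1}` (center `0`, leaves `1,…,k-1`) embedded
in the part `{0,…,⌊n/2⌋-1}` of size `⌊n/2⌋`. -/
def bipStar (n k : ℕ) : SimpleGraph (Fin n) :=
  SimpleGraph.fromRel (fun x y =>
    (x.val < n / 2 ∧ n / 2 ≤ y.val) ∨ (x.val = 0 ∧ 0 < y.val ∧ y.val < k))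

/-- `K_{⌈n/2⌉,⌊n/2⌋}` with a triangle `C₃` on `{0,1,2}` embedded in the part of size `⌊n/2⌋`. -/
def bipTri (n : ℕ) : SimpleGraph (Fin n) :=
  SimpleGraph.fromRel (fun x y =>
    (x.val < n / 2 ∧ n / 2 ≤ y.val) ∨ (x.val < 3 ∧ y.val < 3))

/-- `v` is a cut vertex of `G`. -/
def IsCutVertex {V : Type*} (G : SimpleGraph V) (v : V) : Prop :=
  ∃ a b : ({v}ᶜ : Set V), G.Reachable ↑a ↑b ∧ ¬ (G.induce ({v}ᶜ : Set V)).Reachable a b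

noncomputable def aa : ℕ → ℕ → ℝ := fun k l =>
  if k ≠ l ∧ (k = 0 ∨ l = 0 ∨ (k < 4 ∧ l < 4)) then 1 else 0

noncomputable def ww (s b : ℝ) : ℕ → ℝ := fun k => if k = 0 then s else if k < 4 then b else 1

noncomputable def hh (s b c4 : ℝ) : ℕ → ℝ := fun k =>
  if k = 0 then 3*b + c4 else if k < 4 then s + 2*b else s

lemma sum_split (n : ℕ) (hn : 4 ≤ n) (f : ℕ → ℝ) (c : ℝ) (h : ∀ k, 4 ≤ k → k < n → f k = c) :
    ∑ k ∈ Finset.range n, f k = f 0 + f 1 + f 2 + f 3 + (n - 4 : ℕ) * c := by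
  rw [Finset.range_eq_Ico, ← Finset.sum_Ico_consecutive _ (Nat.zero_le 4) hn]
  rw [Finset.sum_congr rfl (fun k hk => h k (Finset.mem_Ico.mp hk).1 (Finset.mem_Ico.mp hk).2)]
  rw [Finset.sum_const, Nat.card_Ico, ← Finset.range_eq_Ico]
  simp [Finset.sum_range_succ]

lemma row (n : ℕ) (hn : 4 ≤ n) (s b : ℝ) (k : ℕ) :
    ∑ l ∈ Finset.range n, aa k l * ww s b l = hh s b ((n - 4 : ℕ) : ℝ) k := by
  by_cases h4 : k < 4
  · interval_cases k
    · rw [sum_split n hn _ 1 ?_]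
      · norm_num [aa, ww, hh]; ring
      · intro l hl hl'
        have h0 : l ≠ 0 := by omega
        have h4 : ¬ l < 4 := by omega
        simp [aa, ww, h0, h4, h0.symm]
    all_goals {
      rw [sum_split n hn _ 0 ?_]
      · norm_num [aa, ww, hh]; ring
      · intro l hl hl'
        have h0 : l ≠ 0 := by omega
        have h4 : ¬ l < 4 := by omega
        simp [aa, ww, h0, h4] }
  · have hk0 : k ≠ 0 := by omega
    rw [sum_split n hn _ 0 ?_]
    · norm_num [aa, ww, hh, hk0, h4]
    · intro l hl hl'
      have h0 : l ≠ 0 := by omega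
      have hl4 : ¬ l < 4 := by omega
      simp [aa, ww, h0, hl4, hk0, h4]

lemma adj_eq (n : ℕ) (i j : Fin n) : adjMat (K4Star n) i j = aa i.val j.val := by
  simp only [adjMat, K4Star, Matrix.of_apply, aa, SimpleGraph.fromRel_adj]
  congr 1
  simp only [eq_iff_iff, ne_eq, ← Fin.val_ne_iff]
  tauto

lemma key (m s u : ℝ) (hm : 4 ≤ m) (hs : s^2 = m) (hs0 : 0 ≤ s) (hu : m * u = 1) (hu0 : 0 < u) :
    s + 3*u <
      ((3*(1+u) + (m-3))*s + (s+2*(1+u))*(1+u)*3 + (m-3)*s) /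
        (s*s + (1+u)*(1+u)*3 + (m-3)) := by
  have hsm : s ≤ m := by nlinarith
  have h1 : s * s = m := by nlinarith
  have hule : u ≤ 1/4 := by nlinarith
  have hsu : s * u ≤ 1 := by nlinarith [mul_le_mul_of_nonneg_right hsm hu0.le]
  have hD : 0 < s*s + (1+u)*(1+u)*3 + (m-3) := by nlinarith [mul_self_nonneg (1+u)]
  rw [lt_div_iff₀ hD, h1]
  nlinarith [mul_pos hu0 hu0, mul_pos (mul_pos hu0 hu0) hu0,
    mul_le_mul_of_nonneg_right hsu (mul_pos hu0 hu0).le,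
    mul_le_mul_of_nonneg_right hule (mul_pos hu0 hu0).le,
    mul_le_mul_of_nonneg_left hsu hu0.le]

theorem stmt5 (n : ℕ) (hn : 5 ≤ n) :
    specRad (K4Star n) > Real.sqrt ((n : ℝ) - 1) + 3 / ((n : ℝ) - 1) := by
  classical
  have hn4 : 4 ≤ n := by omega
  set m : ℝ := (n : ℝ) - 1 with hm_def
  have hn5 : (5:ℝ) ≤ (n:ℝ) := by exact_mod_cast hn
  have hm : 4 ≤ m := by simp only [hm_def]; linarith
  have hm0 : 0 < m := by linarith
  set s : ℝ := Real.sqrt m with hs_def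
  have hs0 : 0 ≤ s := Real.sqrt_nonneg m
  have hs : s ^ 2 = m := Real.sq_sqrt (by linarith)
  set b : ℝ := 1 + 1/m with hb_def
  have hc4 : ((n - 4 : ℕ) : ℝ) = m - 3 := by
    push_cast [hn4]; simp only [hm_def]; ring
  set A := adjMat (K4Star n) with hA_def
  have hAsymm : A.IsHermitian := by
    ext i j
    simp only [Matrix.conjTranspose_apply, hA_def, adjMat, Matrix.of_apply, star_trivial]
    rw [SimpleGraph.adj_comm]
  have hsym : (Matrix.toEuclideanLin A).IsSymmetric :=
    Matrix.isHermitian_iff_isSymmetric.mp hAsymm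
  set T := Matrix.toEuclideanLin A with hT_def
  haveI : Nontrivial (EuclideanSpace ℝ (Fin n)) := by
    have : Nonempty (Fin n) := ⟨⟨0, by omega⟩⟩
    infer_instance
  -- the operator norm bound
  set C : ℝ := ‖Matrix.toEuclideanCLM (𝕜 := ℝ) A‖ with hC_def
  have hTC : ∀ v : EuclideanSpace ℝ (Fin n), T v = Matrix.toEuclideanCLM (𝕜 := ℝ) A v :=
    fun v => rfl
  -- the supremum eigenvalue
  set lam : ℝ := ⨆ x : {x : EuclideanSpace ℝ (Fin n) // x ≠ 0},
      RCLike.re (inner ℝ (T x) (x : EuclideanSpace ℝ (Fin n)) : ℝ) /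
        ‖(x : EuclideanSpace ℝ (Fin n))‖ ^ 2 with hlam_def
  have hev : Module.End.HasEigenvalue T lam := by
    exact hsym.hasEigenvalue_iSup_of_finiteDimensional
  obtain ⟨v, hv⟩ := hev.exists_hasEigenvector
  have hvne : v ≠ 0 := hv.right
  have hvT : T v = lam • v := hv.apply_eq_smul
  -- lam is in the specRad set
  have hmem : lam ∈ {t : ℝ | ∃ x : Fin n → ℝ, x ≠ 0 ∧ (adjMat (K4Star n)).mulVec x = t • x} := by
    refine ⟨WithLp.equiv 2 (Fin n → ℝ) v, ?_, ?_⟩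
    · intro h
      apply hvne
      have := congrArg (WithLp.equiv 2 (Fin n → ℝ)).symm h
      simpa using this
    · have : A.mulVec (WithLp.equiv 2 (Fin n → ℝ) v) = WithLp.equiv 2 (Fin n → ℝ) (T v) := rfl
      rw [this, hvT]
      rfl
  -- bounded above
  have hBdd : ∀ t ∈ {t : ℝ | ∃ x : Fin n → ℝ, x ≠ 0 ∧ (adjMat (K4Star n)).mulVec x = t • x},
      t ≤ C := by
    rintro t ⟨x, hx0, hx⟩
    set v' : EuclideanSpace ℝ (Fin n) := (WithLp.equiv 2 (Fin n → ℝ)).symm x with hv'_def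
    have hv'0 : v' ≠ 0 := by
      intro h; apply hx0
      have := congrArg (WithLp.equiv 2 (Fin n → ℝ)) h
      simpa [hv'_def] using this
    have hTv' : Matrix.toEuclideanCLM (𝕜 := ℝ) A v' = t • v' := by
      have : Matrix.toEuclideanCLM (𝕜 := ℝ) A v'
          = (WithLp.equiv 2 (Fin n → ℝ)).symm (A.mulVec x) := rfl
      rw [this, hx]
      rfl
    have hnorm := (Matrix.toEuclideanCLM (𝕜 := ℝ) A).le_opNorm v'
    rw [hTv', norm_smul] at hnorm
    have hv'pos : 0 < ‖v'‖ := norm_pos_iff.mpr hv'0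
    have : |t| ≤ C := by
      rw [Real.norm_eq_abs] at hnorm
      exact le_of_mul_le_mul_right hnorm hv'pos
    exact (le_abs_self t).trans this
  -- test vector
  set g : EuclideanSpace ℝ (Fin n) :=
    (WithLp.equiv 2 (Fin n → ℝ)).symm (fun i => ww s b i.val) with hg_def
  have hspos : 0 < s := Real.sqrt_pos.mpr hm0
  have hg0 : g ≠ 0 := by
    intro h
    have := congrFun (congrArg (WithLp.equiv 2 (Fin n → ℝ)) h) ⟨0, by omega⟩
    simp [hg_def, ww] at this
    exact hspos.ne' this
  have hgi : ∀ i : Fin n, g i = ww s b i.val := fun i => rfl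
  have hTg : ∀ i : Fin n, T g i = hh s b ((n - 4 : ℕ) : ℝ) i.val := by
    intro i
    have h1 : T g i = A.mulVec (fun j => ww s b j.val) i := rfl
    rw [h1, Matrix.mulVec]
    show ∑ j : Fin n, A i j * ww s b j.val = _
    rw [Finset.sum_congr rfl (fun j _ => by
      rw [show A i j = aa i.val j.val from adj_eq n i j])]
    rw [Fin.sum_univ_eq_sum_range (fun l => aa i.val l * ww s b l) n]
    exact row n hn4 s b i.val
  have htail : ∀ k, 4 ≤ k → k < n → hh s b ((n - 4 : ℕ) : ℝ) k * ww s b k = s := by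
    intro k hk hk'
    have h0 : k ≠ 0 := by omega
    have h4 : ¬ k < 4 := by omega
    simp [hh, ww, h0, h4]
  have hinner : (inner ℝ (T g) g : ℝ)
      = ((3*b + (m-3))*s + (s+2*b)*b*3 + (m-3)*s) := by
    rw [PiLp.inner_apply]
    simp only [RCLike.inner_apply, starRingEnd_apply, star_trivial]
    rw [Finset.sum_congr rfl (fun i _ => by rw [hTg i, hgi i])]
    rw [Finset.sum_congr rfl (fun i _ => mul_comm _ _)]
    rw [Fin.sum_univ_eq_sum_range (fun k => hh s b ((n - 4 : ℕ) : ℝ) k * ww s b k) n]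
    rw [sum_split n hn4 _ s htail, hc4]
    norm_num [hh, ww]
    ring
  have htail2 : ∀ k, 4 ≤ k → k < n → ww s b k * ww s b k = 1 := by
    intro k hk hk'
    have h0 : k ≠ 0 := by omega
    have h4 : ¬ k < 4 := by omega
    simp [ww, h0, h4]
  have hnormsq : ‖g‖ ^ 2 = s*s + b*b*3 + (m-3) := by
    rw [← real_inner_self_eq_norm_sq]
    rw [PiLp.inner_apply]
    simp only [RCLike.inner_apply, starRingEnd_apply, star_trivial]
    rw [Finset.sum_congr rfl (fun i _ => by rw [hgi i])]
    rw [Fin.sum_univ_eq_sum_range (fun k => ww s b k * ww s b k) n]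
    rw [sum_split n hn4 _ 1 htail2, hc4]
    norm_num [ww]
    ring
  -- the Rayleigh quotient of g exceeds the bound
  have hray : s + 3 / m <
      RCLike.re (inner ℝ (T g) g : ℝ) / ‖g‖ ^ 2 := by
    have hre : RCLike.re (inner ℝ (T g) g : ℝ) = (inner ℝ (T g) g : ℝ) := rfl
    rw [hre, hinner, hnormsq, hb_def]
    rw [show (3:ℝ)/m = 3*(1/m) by ring]
    exact key m s (1/m) hm hs hs0 (mul_one_div_cancel hm0.ne') (by positivity)
  -- lam dominates the Rayleigh quotient
  have hlam_ge : RCLike.re (inner ℝ (T g) g : ℝ) / ‖g‖ ^ 2 ≤ lam := by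
    rw [hlam_def]
    apply le_ciSup (f := fun x : {x : EuclideanSpace ℝ (Fin n) // x ≠ 0} =>
      RCLike.re (inner ℝ (T x) (x : EuclideanSpace ℝ (Fin n)) : ℝ) /
        ‖(x : EuclideanSpace ℝ (Fin n))‖ ^ 2) ?_ ⟨g, hg0⟩
    refine ⟨C, ?_⟩
    rintro y ⟨⟨x, hx0⟩, rfl⟩
    have hxpos : 0 < ‖x‖ := norm_pos_iff.mpr hx0
    have h1 : (inner ℝ (T x) x : ℝ) ≤ C * ‖x‖ ^ 2 := by
      calc (inner ℝ (T x) x : ℝ) ≤ ‖T x‖ * ‖x‖ := real_inner_le_norm _ _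
        _ ≤ (C * ‖x‖) * ‖x‖ := by
            apply mul_le_mul_of_nonneg_right _ (norm_nonneg x)
            rw [hTC x]
            exact (Matrix.toEuclideanCLM (𝕜 := ℝ) A).le_opNorm x
        _ = C * ‖x‖ ^ 2 := by ring
    show RCLike.re (inner ℝ (T x) x : ℝ) / ‖x‖ ^ 2 ≤ C
    have hre : RCLike.re (inner ℝ (T x) x : ℝ) = (inner ℝ (T x) x : ℝ) := rfl
    rw [hre, div_le_iff₀ (by positivity)]
    exact h1
  have hsup : lam ≤ specRad (K4Star n) := le_csSup ⟨C, fun t ht => hBdd t ht⟩ hmem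
  have : s + 3 / m < specRad (K4Star n) := lt_of_lt_of_le hray (hlam_ge.trans hsup)
  exact this
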